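/- arXiv:1401.7273 — 2 statements merged into one kernel-verified Lean document; each statement's English description precedes it below -/
import Mathlib

section
/- For the q-ary Potts model on the wrapped L×L grid (N = L², β > 0), the partition function satisfies Z ≤ (q + (q^N − q)e^{−8β}) e^{2Nβ}, assuming L ≥ 2. -/
open Finset


lemma aux_cycle_const {L : ℕ} [NeZero L] {α : Type*} (f : ZMod L → α)
    (h : ∀ i, f i = f (i + 1)) (i j : ZMod L) : f i = f j := by
  have key : ∀ (a : ZMod L) (k : ℕ), f (a + (k : ZMod L)) = f a := by
    intro a k
    induction k with
    | zero => simp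
    | succ n ih =>
        have h2 : ((n + 1 : ℕ) : ZMod L) = (n : ZMod L) + 1 := by push_cast; ring
        rw [h2, ← add_assoc, ← h (a + n), ih]
  have h2 : j = i + (((j - i).val : ℕ) : ZMod L) := by
    rw [ZMod.natCast_val, ZMod.cast_id]; ring
  rw [h2, key]

lemma aux_cycle_two {L q : ℕ} [NeZero L] (hL : 2 ≤ L) (f : ZMod L → ZMod q)
    (hf : ¬ ∀ i j : ZMod L, f i = f j) :
    2 ≤ (univ.filter (fun i : ZMod L => f i ≠ f (i + 1))).card := by
  by_contra hc
  push_neg at hc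
  interval_cases h : (univ.filter (fun i : ZMod L => f i ≠ f (i + 1))).card
  · -- card = 0 : f constant
    have he : (univ.filter (fun i : ZMod L => f i ≠ f (i + 1))) = ∅ := card_eq_zero.mp h
    refine hf (fun i j => aux_cycle_const f (fun i => ?_) i j)
    by_contra hne
    have : i ∈ (univ.filter (fun i : ZMod L => f i ≠ f (i + 1))) := by simp [hne]
    simp [he] at this
  · -- card = 1
    obtain ⟨i0, hi0⟩ := card_eq_one.mp h
    have hiff : ∀ i : ZMod L, f i ≠ f (i + 1) ↔ i = i0 := by
      intro i
      constructor
      · intro hne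
        have : i ∈ (univ.filter (fun i : ZMod L => f i ≠ f (i + 1))) := by simp [hne]
        rw [hi0] at this; simpa using this
      · intro hi; subst hi
        have : i ∈ (univ.filter (fun i : ZMod L => f i ≠ f (i + 1))) := by
          rw [hi0]; simp
        simpa using this
    have key : ∀ k : ℕ, 1 ≤ k → k ≤ L → f (i0 + (k : ZMod L)) = f (i0 + 1) := by
      intro k
      induction k with
      | zero => intro h1 _; omega
      | succ n ih =>
          intro _ h2
          rcases Nat.eq_zero_or_pos n with h' | h'
          · subst h'; norm_num
          · have hn1 : 1 ≤ n := by omega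
            have hnL : n < L := by omega
            have hne0 : ((n : ZMod L)) ≠ 0 := by
              intro h0
              have hd := (ZMod.natCast_eq_zero_iff n L).mp h0
              have := Nat.le_of_dvd (by omega) hd
              omega
            have hnei0 : i0 + (n : ZMod L) ≠ i0 := by
              intro hh
              exact hne0 (by simpa using hh)
            have hgood : f (i0 + (n : ZMod L)) = f (i0 + (n : ZMod L) + 1) := by
              by_contra hbad
              exact hnei0 ((hiff _).mp hbad)
            have hc2 : ((n + 1 : ℕ) : ZMod L) = (n : ZMod L) + 1 := by push_cast; ring
            rw [hc2, ← add_assoc, ← hgood, ih hn1 (by omega)]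
    have hfin := key L (by omega) le_rfl
    rw [ZMod.natCast_self, add_zero] at hfin
    exact ((hiff i0).mpr rfl) hfin

lemma aux_grid {L q : ℕ} [NeZero L] [NeZero q] (hL : 2 ≤ L)
    (x : ZMod L × ZMod L → ZMod q)
    (hx : ¬ ∀ v w, x v = x w) :
    4 ≤ (univ.filter (fun p : (ZMod L × ZMod L) × Bool =>
        x p.1 ≠ x (p.1 + (if p.2 then ((1:ZMod L),(0:ZMod L)) else ((0:ZMod L),(1:ZMod L)))))).card := by
  classical
  set Bad := (univ.filter (fun p : (ZMod L × ZMod L) × Bool =>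
        x p.1 ≠ x (p.1 + (if p.2 then ((1:ZMod L),(0:ZMod L)) else ((0:ZMod L),(1:ZMod L)))))) with hBad
  set Sh : ZMod L → Finset ((ZMod L × ZMod L) × Bool) := fun j =>
    (univ.filter (fun i : ZMod L => x (i, j) ≠ x (i + 1, j))).image
      (fun i => (((i, j) : ZMod L × ZMod L), true)) with hSh
  set Sv : ZMod L → Finset ((ZMod L × ZMod L) × Bool) := fun i =>
    (univ.filter (fun j : ZMod L => x (i, j) ≠ x (i, j + 1))).image
      (fun j => (((i, j) : ZMod L × ZMod L), false)) with hSv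
  have hShBad : ∀ j, Sh j ⊆ Bad := by
    intro j p hp
    simp only [hSh, mem_image, mem_filter, mem_univ, true_and] at hp
    obtain ⟨i, hi, rfl⟩ := hp
    simp only [hBad, mem_filter, mem_univ, true_and, if_pos]
    convert hi using 2
    simp [Prod.ext_iff]
  have hSvBad : ∀ i, Sv i ⊆ Bad := by
    intro i p hp
    simp only [hSv, mem_image, mem_filter, mem_univ, true_and] at hp
    obtain ⟨j, hj, rfl⟩ := hp
    simp only [hBad, mem_filter, mem_univ, true_and]
    simp only [if_neg Bool.false_ne_true]
    convert hj using 2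
    simp [Prod.ext_iff]
  have hShC : ∀ j, (¬ ∀ i i' : ZMod L, x (i, j) = x (i', j)) → 2 ≤ (Sh j).card := by
    intro j hj
    rw [hSh]
    rw [Finset.card_image_of_injective _ (by intro a b hab; simpa [Prod.ext_iff] using hab)]
    exact aux_cycle_two hL (fun i => x (i, j)) hj
  have hSvC : ∀ i, (¬ ∀ j j' : ZMod L, x (i, j) = x (i, j')) → 2 ≤ (Sv i).card := by
    intro i hi
    rw [hSv]
    rw [Finset.card_image_of_injective _ (by intro a b hab; simpa [Prod.ext_iff] using hab)]
    exact aux_cycle_two hL (fun j => x (i, j)) hi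
  -- general combining principle
  have comb : ∀ A B : Finset ((ZMod L × ZMod L) × Bool), A ⊆ Bad → B ⊆ Bad →
      Disjoint A B → 2 ≤ A.card → 2 ≤ B.card → 4 ≤ Bad.card := by
    intro A B hA hB hd h2 h2'
    calc (4:ℕ) ≤ A.card + B.card := by omega
    _ = (A ∪ B).card := (Finset.card_union_of_disjoint hd).symm
    _ ≤ Bad.card := Finset.card_le_card (Finset.union_subset hA hB)
  have hdShSv : ∀ j i, Disjoint (Sh j) (Sv i) := by
    intro j i
    rw [Finset.disjoint_left]
    intro p hp hp'
    simp only [hSh, mem_image] at hp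
    simp only [hSv, mem_image] at hp'
    obtain ⟨a, _, rfl⟩ := hp
    obtain ⟨b, _, hb⟩ := hp'
    simp [Prod.ext_iff] at hb
  have hdShSh : ∀ j j', j ≠ j' → Disjoint (Sh j) (Sh j') := by
    intro j j' hjj
    rw [Finset.disjoint_left]
    intro p hp hp'
    simp only [hSh, mem_image] at hp hp'
    obtain ⟨a, _, rfl⟩ := hp
    obtain ⟨b, _, hb⟩ := hp'
    rw [Prod.ext_iff, Prod.ext_iff] at hb
    exact hjj hb.1.2.symm
  have hdSvSv : ∀ i i', i ≠ i' → Disjoint (Sv i) (Sv i') := by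
    intro i i' hii
    rw [Finset.disjoint_left]
    intro p hp hp'
    simp only [hSv, mem_image] at hp hp'
    obtain ⟨a, _, rfl⟩ := hp
    obtain ⟨b, _, hb⟩ := hp'
    rw [Prod.ext_iff, Prod.ext_iff] at hb
    exact hii hb.1.1.symm
  have h01 : (0 : ZMod L) ≠ 1 := by
    intro h
    have : ((1:ℕ) : ZMod L) = 0 := by exact_mod_cast h.symm
    have := (ZMod.natCast_eq_zero_iff 1 L).mp this
    have := Nat.le_of_dvd (by omega) this
    omega
  by_cases hrow : ∃ j, ¬ ∀ i i' : ZMod L, x (i, j) = x (i', j)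
  · obtain ⟨j0, hj0⟩ := hrow
    by_cases hcol : ∃ i, ¬ ∀ j j' : ZMod L, x (i, j) = x (i, j')
    · obtain ⟨i0, hi0⟩ := hcol
      exact comb (Sh j0) (Sv i0) (hShBad j0) (hSvBad i0) (hdShSv j0 i0)
        (hShC j0 hj0) (hSvC i0 hi0)
    · -- all columns constant: x (i,j) = x (i,j') always
      push_neg at hcol
      have hcc : ∀ i j j', x (i, j) = x (i, j') := fun i => hcol i
      have hrownc : ∀ j, ¬ ∀ i i' : ZMod L, x (i, j) = x (i', j) := by
        intro j hcon
        exact hj0 (fun i i' => by rw [hcc i j0 j, hcc i' j0 j]; exact hcon i i')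
      exact comb (Sh 0) (Sh 1) (hShBad 0) (hShBad 1) (hdShSh 0 1 h01)
        (hShC 0 (hrownc 0)) (hShC 1 (hrownc 1))
  · -- all rows constant
    push_neg at hrow
    have hrr : ∀ j i i', x (i, j) = x (i', j) := fun j => hrow j
    have hcolnc : ∀ i, ¬ ∀ j j' : ZMod L, x (i, j) = x (i, j') := by
      intro i hcon
      refine hx (fun v w => ?_)
      calc x v = x (i, v.2) := hrr v.2 v.1 i
      _ = x (i, w.2) := hcon v.2 w.2
      _ = x w := hrr w.2 i w.1
    exact comb (Sv 0) (Sv 1) (hSvBad 0) (hSvBad 1) (hdSvSv 0 1 h01)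
      (hSvC 0 (hcolnc 0)) (hSvC 1 (hcolnc 1))

theorem potts_partition_function_refined_upper_bound (L q : ℕ) [NeZero L] [NeZero q]
    (hL : 2 ≤ L) (hq : 2 ≤ q)
    (β : ℝ) (hβ : 0 < β) (N : ℕ) (hN : N = L * L)
    (g : ZMod q → ZMod q → ℝ) (hg : ∀ a b, g a b = if a = b then 1 else -1)
    (Z : ℝ)
    (hZ : Z = ∑ x : (ZMod L × ZMod L) → ZMod q, ∏ v : ZMod L × ZMod L,
      Real.exp (β * g (x v) (x (v + ((1 : ZMod L), (0 : ZMod L))))) *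
        Real.exp (β * g (x v) (x (v + ((0 : ZMod L), (1 : ZMod L)))))) :
    Z ≤ ((q : ℝ) + ((q : ℝ) ^ N - (q : ℝ)) * Real.exp (-(8 * β))) *
          Real.exp (2 * (N : ℝ) * β) := by
  classical
  obtain ⟨S, hSdef⟩ : ∃ S : ((ZMod L × ZMod L) → ZMod q) → ℝ, S = fun x =>
    ∑ p : (ZMod L × ZMod L) × Bool,
      g (x p.1) (x (p.1 + (if p.2 then ((1:ZMod L),(0:ZMod L)) else ((0:ZMod L),(1:ZMod L))))) :=
    ⟨_, rfl⟩
  have hcard2 : Fintype.card ((ZMod L × ZMod L) × Bool) = 2 * N := by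
    simp [ZMod.card, hN]; ring
  have hterm : ∀ x : (ZMod L × ZMod L) → ZMod q,
      (∏ v : ZMod L × ZMod L,
        Real.exp (β * g (x v) (x (v + ((1 : ZMod L), (0 : ZMod L))))) *
          Real.exp (β * g (x v) (x (v + ((0 : ZMod L), (1 : ZMod L)))))) = Real.exp (β * S x) := by
    intro x
    simp only [hSdef]
    rw [Finset.mul_sum, Real.exp_sum]
    conv_rhs => rw [Fintype.prod_prod_type]
    apply Finset.prod_congr rfl
    intro v _
    rw [Fintype.prod_bool]
    simp
  -- exact value of S
  have hSval : ∀ x, S x = 2 * (N : ℝ) - 2 * ((univ.filter (fun p : (ZMod L × ZMod L) × Bool =>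
      x p.1 ≠ x (p.1 + (if p.2 then ((1:ZMod L),(0:ZMod L)) else ((0:ZMod L),(1:ZMod L)))))).card : ℝ) := by
    intro x
    have h1 : S x = ∑ p : (ZMod L × ZMod L) × Bool,
        (if x p.1 ≠ x (p.1 + (if p.2 then ((1:ZMod L),(0:ZMod L)) else ((0:ZMod L),(1:ZMod L))))
          then (-1:ℝ) else 1) := by
      simp only [hSdef]
      apply Finset.sum_congr rfl
      intro p _
      rw [hg]
      by_cases h : x p.1 = x (p.1 + (if p.2 then ((1:ZMod L),(0:ZMod L)) else ((0:ZMod L),(1:ZMod L)))) <;>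
        simp [h]
    rw [h1, Finset.sum_ite, Finset.sum_const, Finset.sum_const]
    set B := (univ.filter (fun p : (ZMod L × ZMod L) × Bool =>
      x p.1 ≠ x (p.1 + (if p.2 then ((1:ZMod L),(0:ZMod L)) else ((0:ZMod L),(1:ZMod L)))))).card
    have hBsum : B + (univ.filter (fun p : (ZMod L × ZMod L) × Bool =>
        ¬ x p.1 ≠ x (p.1 + (if p.2 then ((1:ZMod L),(0:ZMod L)) else ((0:ZMod L),(1:ZMod L)))))).card
        = 2 * N := by
      rw [Finset.card_filter_add_card_filter_not, Finset.card_univ, hcard2]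
    have hBle : B ≤ 2 * N := by omega
    have hcast : (B:ℝ) + ((univ.filter (fun p : (ZMod L × ZMod L) × Bool =>
        ¬ x p.1 ≠ x (p.1 + (if p.2 then ((1:ZMod L),(0:ZMod L)) else ((0:ZMod L),(1:ZMod L)))))).card : ℝ)
        = 2 * N := by exact_mod_cast hBsum
    simp only [nsmul_eq_mul, mul_one, mul_neg_one]
    linarith
  have hSconst : ∀ x : (ZMod L × ZMod L) → ZMod q, (∀ v w, x v = x w) → S x = 2 * (N:ℝ) := by
    intro x hx
    rw [hSval x]
    have : (univ.filter (fun p : (ZMod L × ZMod L) × Bool =>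
        x p.1 ≠ x (p.1 + (if p.2 then ((1:ZMod L),(0:ZMod L)) else ((0:ZMod L),(1:ZMod L)))))) = ∅ := by
      apply Finset.filter_false_of_mem
      intro p _
      exact not_not_intro (hx _ _)
    rw [this]
    simp
  have hSnc : ∀ x : (ZMod L × ZMod L) → ZMod q, (¬ ∀ v w, x v = x w) → S x ≤ 2 * (N:ℝ) - 8 := by
    intro x hx
    rw [hSval x]
    have h4 := aux_grid hL x hx
    have : (4:ℝ) ≤ ((univ.filter (fun p : (ZMod L × ZMod L) × Bool =>
        x p.1 ≠ x (p.1 + (if p.2 then ((1:ZMod L),(0:ZMod L)) else ((0:ZMod L),(1:ZMod L)))))).card : ℝ) := by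
      exact_mod_cast h4
    linarith
  -- rewrite Z
  have hZ2 : Z = ∑ x : (ZMod L × ZMod L) → ZMod q, Real.exp (β * S x) := by
    rw [hZ]; exact Finset.sum_congr rfl (fun x _ => hterm x)
  rw [hZ2, ← Finset.sum_filter_add_sum_filter_not univ
    (fun x : (ZMod L × ZMod L) → ZMod q => ∀ v w, x v = x w)]
  have hCcard : (univ.filter (fun x : (ZMod L × ZMod L) → ZMod q => ∀ v w, x v = x w)).card = q := by
    have himg : (univ.filter (fun x : (ZMod L × ZMod L) → ZMod q => ∀ v w, x v = x w))
        = (univ : Finset (ZMod q)).image (fun c _ => c) := by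
      ext x
      simp only [mem_filter, mem_univ, true_and, mem_image]
      constructor
      · intro h
        exact ⟨x (0, 0), funext (fun v => (h (0,0) v))⟩
      · rintro ⟨c, rfl⟩ v w
        rfl
    rw [himg, Finset.card_image_of_injective, Finset.card_univ, ZMod.card]
    intro a b hab
    exact congrFun hab (0, 0)
  have hfuncard : (univ.filter (fun x : (ZMod L × ZMod L) → ZMod q => ¬ ∀ v w, x v = x w)).card
      = q ^ N - q := by
    have h1 : (univ.filter (fun x : (ZMod L × ZMod L) → ZMod q => ∀ v w, x v = x w)).card +
        (univ.filter (fun x : (ZMod L × ZMod L) → ZMod q => ¬ ∀ v w, x v = x w)).card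
        = q ^ N := by
      rw [Finset.card_filter_add_card_filter_not, Finset.card_univ]
      simp [ZMod.card, hN]
    rw [hCcard] at h1
    obtain ⟨A, hA⟩ : ∃ A, (univ.filter (fun x : (ZMod L × ZMod L) → ZMod q => ¬ ∀ v w, x v = x w)).card = A := ⟨_, rfl⟩
    rw [hA] at h1 ⊢
    clear hCcard hA
    omega
  have hsum1 : ∑ x ∈ (univ.filter (fun x : (ZMod L × ZMod L) → ZMod q => ∀ v w, x v = x w)),
      Real.exp (β * S x) = (q:ℝ) * Real.exp (2 * (N:ℝ) * β) := by
    have hh : ∀ x ∈ (univ.filter (fun x : (ZMod L × ZMod L) → ZMod q => ∀ v w, x v = x w)),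
        Real.exp (β * S x) = Real.exp (2 * (N:ℝ) * β) := by
      intro x hx
      rw [hSconst x (Finset.mem_filter.mp hx).2]
      congr 1
      ring
    rw [Finset.sum_congr rfl hh, Finset.sum_const, hCcard, nsmul_eq_mul]
  have hsum2 : ∑ x ∈ (univ.filter (fun x : (ZMod L × ZMod L) → ZMod q => ¬ ∀ v w, x v = x w)),
      Real.exp (β * S x) ≤ ((q:ℝ)^N - (q:ℝ)) * (Real.exp (-(8*β)) * Real.exp (2 * (N:ℝ) * β)) := by
    have hb : ∀ x ∈ (univ.filter (fun x : (ZMod L × ZMod L) → ZMod q => ¬ ∀ v w, x v = x w)),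
        Real.exp (β * S x) ≤ Real.exp (-(8*β)) * Real.exp (2 * (N:ℝ) * β) := by
      intro x hx
      have h1 := hSnc x (Finset.mem_filter.mp hx).2
      rw [← Real.exp_add]
      apply Real.exp_le_exp.mpr
      nlinarith [hβ.le]
    calc ∑ x ∈ (univ.filter (fun x : (ZMod L × ZMod L) → ZMod q => ¬ ∀ v w, x v = x w)),
        Real.exp (β * S x)
        ≤ (univ.filter (fun x : (ZMod L × ZMod L) → ZMod q => ¬ ∀ v w, x v = x w)).card •
          (Real.exp (-(8*β)) * Real.exp (2 * (N:ℝ) * β)) := Finset.sum_le_card_nsmul _ _ _ hb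
      _ = ((q:ℝ)^N - (q:ℝ)) * (Real.exp (-(8*β)) * Real.exp (2 * (N:ℝ) * β)) := by
          rw [hfuncard, nsmul_eq_mul]
          congr 1
          have hLpos : 0 < L := lt_of_lt_of_le (by norm_num) hL
          have hNpos : 0 < N := by rw [hN]; exact Nat.mul_pos hLpos hLpos
          have hqN : q ≤ q ^ N := Nat.le_self_pow hNpos.ne' q
          push_cast [Nat.cast_sub hqN]
          ring
  calc (∑ x ∈ (univ.filter (fun x : (ZMod L × ZMod L) → ZMod q => ∀ v w, x v = x w)),
      Real.exp (β * S x)) + ∑ x ∈ (univ.filter (fun x : (ZMod L × ZMod L) → ZMod q => ¬ ∀ v w, x v = x w)),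
      Real.exp (β * S x)
      ≤ (q:ℝ) * Real.exp (2 * (N:ℝ) * β) +
        ((q:ℝ)^N - (q:ℝ)) * (Real.exp (-(8*β)) * Real.exp (2 * (N:ℝ) * β)) := by
        rw [hsum1]; exact add_le_add_right hsum2 _
    _ = ((q : ℝ) + ((q : ℝ) ^ N - (q : ℝ)) * Real.exp (-(8 * β))) * Real.exp (2 * (N : ℝ) * β) := by
        ring
end

section
/- Let q ≥ 2 and β > 0, and define the clock-model local function κ_clock : ℤ_q → ℝ by κ_clock(x) = e^{β cos(2πx/q)}. Then its Fourier transform κ̂_clock(y) = Σ_{x∈ℤ_q} κ_clock(x) e^{2πi xy/q} is real and strictly positive for every y ∈ ℤ_q. -/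
open Finset Complex

-- geometric sum over ZMod q
lemma sum_zmod_exp (q : ℕ) [NeZero q] (m : ℤ) :
    ∑ x : ZMod q, Complex.exp (2 * Real.pi * I * m / q) ^ (x.val) =
      if (q : ℤ) ∣ m then (q : ℂ) else 0 := by
  have hq0 : (q : ℂ) ≠ 0 := Nat.cast_ne_zero.mpr (NeZero.ne q)
  have hsum : ∑ x : ZMod q, Complex.exp (2 * Real.pi * I * m / q) ^ (x.val)
      = ∑ j ∈ Finset.range q, Complex.exp (2 * Real.pi * I * m / q) ^ j := by
    refine Finset.sum_nbij' (fun x => x.val) (fun j => (j : ZMod q)) ?_ ?_ ?_ ?_ ?_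
    · intro x _; exact Finset.mem_range.mpr (ZMod.val_lt x)
    · intro j _; exact Finset.mem_univ _
    · intro x _; exact ZMod.natCast_rightInverse x
    · intro j hj; exact ZMod.val_cast_of_lt (Finset.mem_range.mp hj)
    · intro x _; rfl
  rw [hsum]
  by_cases hdvd : (q : ℤ) ∣ m
  · obtain ⟨t, rfl⟩ := hdvd
    have hζ : Complex.exp (2 * Real.pi * I * (((q : ℤ) * t : ℤ)) / q) = 1 := by
      have : (2 * Real.pi * I * (((q : ℤ) * t : ℤ)) / q : ℂ) = (t : ℤ) * (2 * Real.pi * I) := by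
        push_cast
        field_simp
      rw [this, Complex.exp_int_mul_two_pi_mul_I]
    rw [hζ]
    simp
  · have hζ : Complex.exp (2 * Real.pi * I * m / q) ≠ 1 := by
      intro h
      rw [Complex.exp_eq_one_iff] at h
      obtain ⟨n, hn⟩ := h
      apply hdvd
      refine ⟨n, ?_⟩
      have h2 : (2 * Real.pi * I : ℂ) ≠ 0 := by
        simp [Real.pi_ne_zero, Complex.I_ne_zero]
      have hn' : (2 * Real.pi * I : ℂ) * m = (2 * Real.pi * I) * (q * n) := by
        field_simp at hn
        linear_combination (2 * Real.pi * I : ℂ) * hn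
      have : (m : ℂ) = q * n := mul_left_cancel₀ h2 hn'
      exact_mod_cast this
    rw [geom_sum_eq hζ]
    have hq : Complex.exp (2 * Real.pi * I * m / q) ^ q = 1 := by
      rw [← Complex.exp_nat_mul]
      have : (q : ℂ) * (2 * Real.pi * I * m / q) = (m : ℤ) * (2 * Real.pi * I) := by
        field_simp
      rw [this, Complex.exp_int_mul_two_pi_mul_I]
    rw [hq, sub_self, zero_div]
    simp [hdvd]

lemma cos_pow_sum (q : ℕ) [NeZero q] (n : ℕ) (y : ZMod q) :
    ∑ x : ZMod q, (Complex.cos (2 * Real.pi * x.val / q)) ^ n *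
        Complex.exp (2 * Real.pi * I * ((x.val : ℂ) * (y.val : ℂ)) / q)
    = ((q : ℂ) * ∑ k ∈ Finset.range (n+1),
        if (q : ℤ) ∣ (2 * (k : ℤ) - n + y.val) then (n.choose k : ℂ) else 0) / 2 ^ n := by
  have hq0 : (q : ℂ) ≠ 0 := Nat.cast_ne_zero.mpr (NeZero.ne q)
  have key : ∀ x : ZMod q,
      (Complex.cos (2 * Real.pi * x.val / q)) ^ n *
        Complex.exp (2 * Real.pi * I * ((x.val : ℂ) * (y.val : ℂ)) / q)
      = ∑ k ∈ Finset.range (n+1), (n.choose k : ℂ) / 2 ^ n *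
          Complex.exp (2 * Real.pi * I * ((2 * (k:ℤ) - n + y.val : ℤ) : ℂ) / q) ^ (x.val) := by
    intro x
    set θ : ℂ := (2 * Real.pi * x.val / q : ℂ) with hθ
    have hcos : Complex.cos θ = (Complex.exp (θ * I) + Complex.exp (-θ * I)) / 2 := by
      rw [eq_div_iff (two_ne_zero), mul_comm _ (2 : ℂ), Complex.two_cos]
    rw [hcos, div_pow, add_pow, Finset.sum_div, Finset.sum_mul]
    refine Finset.sum_congr rfl ?_
    intro k hk
    have hk' : k ≤ n := Nat.lt_succ_iff.mp (Finset.mem_range.mp hk)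
    rw [← Complex.exp_nat_mul, ← Complex.exp_nat_mul, ← Complex.exp_nat_mul,
      ← Complex.exp_add]
    have hexp : (k : ℂ) * (θ * I) + (↑(n - k) : ℂ) * (-θ * I) +
        2 * Real.pi * I * ((x.val : ℂ) * (y.val : ℂ)) / q
        = (x.val : ℂ) * (2 * Real.pi * I * ((2 * (k:ℤ) - n + y.val : ℤ) : ℂ) / q) := by
      rw [hθ, Nat.cast_sub hk']
      push_cast
      field_simp
      ring
    have hmul : Complex.exp ((k : ℂ) * (θ * I) + (↑(n - k) : ℂ) * (-θ * I)) *
        Complex.exp (2 * Real.pi * I * ((x.val : ℂ) * (y.val : ℂ)) / q)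
        = Complex.exp ((x.val : ℂ) * (2 * Real.pi * I * ((2 * (k:ℤ) - n + y.val : ℤ) : ℂ) / q)) := by
      rw [← Complex.exp_add, hexp]
    linear_combination ((n.choose k : ℂ) / 2 ^ n) * hmul
  rw [Finset.sum_congr rfl (fun x _ => key x), Finset.sum_comm]
  rw [Finset.mul_sum, Finset.sum_div]
  refine Finset.sum_congr rfl ?_
  intro k _
  rw [← Finset.mul_sum, sum_zmod_exp q (2 * (k:ℤ) - n + y.val)]
  split_ifs with h <;> ring

theorem clock_kappa_fourier_positive (q : ℕ) [NeZero q] (hq : 2 ≤ q)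
    (β : ℝ) (hβ : 0 < β)
    (κ : ZMod q → ℝ)
    (hκ : ∀ x : ZMod q, κ x = Real.exp (β * Real.cos (2 * Real.pi * (x.val : ℝ) / q)))
    (κhat : ZMod q → ℂ)
    (hκhat : ∀ y : ZMod q, κhat y =
      ∑ x : ZMod q, (κ x : ℂ) *
        Complex.exp (2 * Real.pi * Complex.I * ((x.val : ℂ) * (y.val : ℂ)) / q)) :
    ∀ y : ZMod q, (κhat y).im = 0 ∧ 0 < (κhat y).re := by
  intro y
  have hq0 : (0 : ℝ) < q := Nat.cast_pos.mpr (NeZero.pos q)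
  set E : ZMod q → ℂ := fun x =>
    Complex.exp (2 * Real.pi * Complex.I * ((x.val : ℂ) * (y.val : ℂ)) / q) with hE
  set s : ℕ → ℕ := fun n => ∑ k ∈ Finset.range (n+1),
    if (q : ℤ) ∣ (2 * (k : ℤ) - n + y.val) then n.choose k else 0 with hs
  set a : ℕ → ℝ := fun n => β ^ n / n.factorial * (q * s n / 2 ^ n) with ha
  -- per-x expansion
  have hκC : ∀ x : ZMod q, (κ x : ℂ) * E x
      = ∑' n : ℕ, ((β : ℂ) * Complex.cos (2 * Real.pi * x.val / q)) ^ n / n.factorial * E x := by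
    intro x
    have h1 : (κ x : ℂ) = Complex.exp ((β : ℂ) * Complex.cos (2 * Real.pi * x.val / q)) := by
      rw [hκ x, Complex.ofReal_exp]
      push_cast
      rfl
    rw [h1, Complex.exp_eq_exp_ℂ, NormedSpace.exp_eq_tsum_div, ← tsum_mul_right]
  have hsummx : ∀ x : ZMod q, Summable fun n : ℕ =>
      ((β : ℂ) * Complex.cos (2 * Real.pi * x.val / q)) ^ n / n.factorial * E x :=
    fun x => (NormedSpace.expSeries_div_summable ((β : ℂ) * Complex.cos (2 * Real.pi * x.val / q))).mul_right _
  -- swap sums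
  have hswap : κhat y = ∑' n : ℕ, ∑ x : ZMod q,
      ((β : ℂ) * Complex.cos (2 * Real.pi * x.val / q)) ^ n / n.factorial * E x := by
    rw [hκhat y, Finset.sum_congr rfl (fun x _ => hκC x)]
    exact (Summable.tsum_finsetSum (fun x _ => hsummx x)).symm
  -- inner sum per n
  have hinner : ∀ n : ℕ, (∑ x : ZMod q,
      ((β : ℂ) * Complex.cos (2 * Real.pi * x.val / q)) ^ n / n.factorial * E x) = ((a n : ℝ) : ℂ) := by
    intro n
    have : (∑ x : ZMod q,
        ((β : ℂ) * Complex.cos (2 * Real.pi * x.val / q)) ^ n / n.factorial * E x)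
        = (β : ℂ) ^ n / n.factorial *
          ∑ x : ZMod q, (Complex.cos (2 * Real.pi * x.val / q)) ^ n * E x := by
      rw [Finset.mul_sum]
      refine Finset.sum_congr rfl fun x _ => ?_
      rw [mul_pow]
      ring
    rw [this, hE, cos_pow_sum q n y]
    have hcast : (∑ k ∈ Finset.range (n+1),
        if (q : ℤ) ∣ (2 * (k : ℤ) - n + y.val) then ((n.choose k : ℕ) : ℂ) else 0)
        = ((s n : ℕ) : ℂ) := by
      rw [hs]
      push_cast
      exact Finset.sum_congr rfl fun k _ => by split_ifs <;> simp
    rw [hcast, ha]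
    push_cast
    ring
  have hfinal : κhat y = ((∑' n : ℕ, a n : ℝ) : ℂ) := by
    rw [hswap]
    rw [Complex.ofReal_tsum]
    exact tsum_congr hinner
  -- properties of a
  have hs_le : ∀ n, s n ≤ 2 ^ n := by
    intro n
    rw [hs, ← Nat.sum_range_choose n]
    exact Finset.sum_le_sum fun k _ => by split_ifs <;> simp
  have ha_nonneg : ∀ n, 0 ≤ a n := by
    intro n
    have : (0:ℝ) ≤ s n := Nat.cast_nonneg _
    positivity
  have ha_le : ∀ n, a n ≤ q * (β ^ n / n.factorial) := by
    intro n
    rw [ha]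
    have h1 : (q : ℝ) * s n / 2 ^ n ≤ q := by
      rw [div_le_iff₀ (by positivity)]
      have : (s n : ℝ) ≤ 2 ^ n := by exact_mod_cast hs_le n
      calc (q : ℝ) * s n ≤ q * 2 ^ n := by
            exact mul_le_mul_of_nonneg_left this (le_of_lt hq0)
        _ = q * 2 ^ n := rfl
    calc β ^ n / n.factorial * (q * s n / 2 ^ n) ≤ β ^ n / n.factorial * q :=
          mul_le_mul_of_nonneg_left h1 (by positivity)
      _ = q * (β ^ n / n.factorial) := by ring
  have ha_summable : Summable a :=
    Summable.of_nonneg_of_le ha_nonneg ha_le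
      ((Real.summable_pow_div_factorial β).mul_left (q:ℝ))
  have hs_pos : 0 < s (y.val) := by
    rw [hs]
    have h0 : (0:ℕ) ∈ Finset.range (y.val + 1) := Finset.mem_range.mpr (Nat.succ_pos _)
    have hterm : (if (q : ℤ) ∣ (2 * ((0:ℕ) : ℤ) - (y.val : ℤ) + y.val)
        then (y.val).choose 0 else 0) = 1 := by
      have : (2 * ((0:ℕ) : ℤ) - (y.val : ℤ) + y.val) = 0 := by ring
      rw [this, if_pos (dvd_zero _), Nat.choose_zero_right]
    calc 0 < 1 := Nat.one_pos
      _ = _ := hterm.symm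
      _ ≤ _ := Finset.single_le_sum (f := fun k : ℕ => if (q : ℤ) ∣ (2 * (k : ℤ) - (y.val : ℤ) + (y.val : ℤ))
          then (y.val).choose k else 0) (fun k _ => Nat.zero_le _) h0
  have ha_pos : 0 < a (y.val) := by
    rw [ha]
    have : (0:ℝ) < s (y.val) := by exact_mod_cast hs_pos
    positivity
  rw [hfinal]
  exact ⟨Complex.ofReal_im _, by
    rw [Complex.ofReal_re]
    exact Summable.tsum_pos ha_summable ha_nonneg _ ha_pos⟩
end
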